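/- Let n ≥ 1 be integer and let A be a graded-commutative ℕ-graded ℚ-algebra that is finite-dimensional as a ℚ-vector space, with A_0 = ℚ·1 and with A_i = 0 for all i with 0 < i < 2n. Let E ⊆ A be the graded subalgebra of A generated by A_{2n}. Then every derivation of E of negative degree with values in A is the zero map. -/

import Mathlib

/-- algebraic core of Theorem 6.4 of Belegradek–Kapovitch.
Let `n ≥ 1` and let `A` be a graded-commutative ℕ-graded ℚ-algebra, finite-dimensional over
ℚ, with `A₀ = ℚ·1` and `A_i = 0` for `0 < i < 2n`.  Let `E ⊆ A` be the (graded) subalgebra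
generated by `A_{2n}`.  Then every derivation of `E` of negative degree `-j` (`j ≥ 1`)
with values in `A` is the zero map. -/
theorem negative_derivation_of_generated_subalgebra_is_zero
    {A : Type} [Ring A] [Algebra ℚ A]
    (𝒜 : ℕ → Submodule ℚ A) [GradedAlgebra 𝒜]
    -- graded commutativity of `A`
    (hcomm : ∀ (p q : ℕ), ∀ a ∈ 𝒜 p, ∀ b ∈ 𝒜 q,
      a * b = (-1 : A) ^ (p * q) * (b * a))
    -- `A₀ = ℚ·1`
    (h0 : 𝒜 0 = Submodule.span ℚ {(1 : A)})
    -- `A` is finite-dimensional as a ℚ-vector space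
    [FiniteDimensional ℚ A]
    (n : ℕ) (hn : 1 ≤ n)
    -- `A_i = 0` for `0 < i < 2n`
    (hvan : ∀ i : ℕ, 0 < i → i < 2 * n → 𝒜 i = ⊥)
    -- `E` is the subalgebra of `A` generated by `A_{2n}`
    (E : Subalgebra ℚ A)
    (hE : E = Algebra.adjoin ℚ ((𝒜 (2 * n) : Submodule ℚ A) : Set A))
    (j : ℕ) (hj : 1 ≤ j)
    -- `D` is a ℚ-linear map `E → A` which is a derivation of degree `-j` with values in `A`:
    (D : E →ₗ[ℚ] A)
    (hdeg : ∀ (p : ℕ) (a : E), (a : A) ∈ 𝒜 (p + j) → D a ∈ 𝒜 p)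
    (hlow : ∀ (p : ℕ), p < j → ∀ a : E, (a : A) ∈ 𝒜 p → D a = 0)
    (hleib : ∀ (p : ℕ) (a b : E), (a : A) ∈ 𝒜 p →
      D (a * b) = D a * (b : A) + (-1 : A) ^ (j * p) * ((a : A) * D b)) :
    D = 0 := by
  classical
  set s : Set A := ((𝒜 (2 * n) : Submodule ℚ A) : Set A) with hs
  -- nilpotency of positive-degree homogeneous elements
  have hnil : ∀ x : A, x ∈ 𝒜 (2 * n) → ∃ m : ℕ, x ^ (m + 1) = 0 := by
    intro x hx
    by_contra h
    push_neg at h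
    have hmem : ∀ k : ℕ, x ^ (k + 1) ∈ 𝒜 ((k + 1) * (2 * n)) := by
      intro k
      simpa using SetLike.pow_mem_graded (k + 1) hx
    have hinj : Function.Injective (fun k : ℕ => (k + 1) * (2 * n)) := by
      intro a b hab
      simp only at hab
      have := Nat.eq_of_mul_eq_mul_right (show 0 < 2 * n by omega) hab
      omega
    have hind : iSupIndep fun k : ℕ => 𝒜 ((k + 1) * (2 * n)) :=
      (DirectSum.IsInternal.submodule_iSupIndep (DirectSum.Decomposition.isInternal 𝒜)).comp hinj
    have li : LinearIndependent ℚ fun k : ℕ => x ^ (k + 1) :=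
      hind.linearIndependent _ hmem h
    exact (not_finite_iff_infinite.mpr inferInstance) li.finite_of_isNoetherian
  -- D vanishes on homogeneous generators
  have hgen : ∀ (x : A) (hx : x ∈ 𝒜 (2 * n)) (hxE : x ∈ E), D ⟨x, hxE⟩ = 0 := by
    intro x hx hxE
    rcases lt_trichotomy j (2 * n) with hlt | heq | hgt
    · -- 0 < 2n - j < 2n, so the target group vanishes
      have hmem : ((⟨x, hxE⟩ : E) : A) ∈ 𝒜 ((2 * n - j) + j) := by
        rwa [Nat.sub_add_cancel hlt.le]
      have := hdeg (2 * n - j) ⟨x, hxE⟩ hmem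
      rw [hvan (2 * n - j) (by omega) (by omega)] at this
      simpa using this
    · -- j = 2n : D x is a scalar, killed by nilpotency
      nontriviality A
      have hmem : ((⟨x, hxE⟩ : E) : A) ∈ 𝒜 (0 + j) := by
        rw [zero_add, heq]; exact hx
      have hD0 : D ⟨x, hxE⟩ ∈ 𝒜 0 := hdeg 0 _ hmem
      rw [h0, Submodule.mem_span_singleton] at hD0
      obtain ⟨c, hc⟩ := hD0
      have hsign : ((-1 : A) ^ (j * (2 * n))) = 1 := by
        rw [heq]
        exact (Even.neg_one_pow ⟨n * (2 * n), by ring⟩)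
      -- membership of powers in E
      have hpowE : ∀ k : ℕ, x ^ (k + 1) ∈ E := fun k => pow_mem hxE _
      -- D (x^(k+1)) = (k+1) c • x^k
      have hpow : ∀ k : ℕ, D ⟨x ^ (k + 1), hpowE k⟩ = (((k : ℚ) + 1) * c) • x ^ k := by
        intro k
        induction k with
        | zero =>
          have : (⟨x ^ 1, hpowE 0⟩ : E) = ⟨x, hxE⟩ := Subtype.ext (pow_one x)
          rw [this, ← hc]
          norm_num
        | succ k ih =>
          have hprod : (⟨x ^ (k + 2), hpowE (k + 1)⟩ : E)
              = (⟨x, hxE⟩ : E) * ⟨x ^ (k + 1), hpowE k⟩ := by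
            apply Subtype.ext
            show x ^ (k + 2) = x * x ^ (k + 1)
            rw [← pow_succ']
          rw [hprod, hleib (2 * n) ⟨x, hxE⟩ ⟨x ^ (k + 1), hpowE k⟩ hx, hsign, ← hc, ih]
          push_cast
          rw [one_mul, smul_mul_assoc, one_mul, mul_smul_comm, ← pow_succ']
          module
      -- find minimal vanishing power
      obtain ⟨m, hm⟩ := hnil x hx
      have hmin := Nat.find_spec (⟨m, hm⟩ : ∃ m, x ^ (m + 1) = 0)
      set m₀ := Nat.find (⟨m, hm⟩ : ∃ m, x ^ (m + 1) = 0) with hm₀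
      have hne : x ^ m₀ ≠ 0 := by
        rcases Nat.eq_zero_or_pos m₀ with h0' | h0'
        · rw [h0', pow_zero]; exact one_ne_zero
        · obtain ⟨k, hk⟩ : ∃ k, m₀ = k + 1 := ⟨m₀ - 1, by omega⟩
          rw [hk]
          exact Nat.find_min (⟨m, hm⟩ : ∃ m, x ^ (m + 1) = 0) (by omega)
      have hz : (⟨x ^ (m₀ + 1), hpowE m₀⟩ : E) = 0 := Subtype.ext hmin
      have := hpow m₀
      rw [hz, map_zero] at this
      have hcz : ((m₀ : ℚ) + 1) * c = 0 := by
        by_contra hcc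
        exact hne (by
          have := (smul_eq_zero.mp this.symm).resolve_left hcc
          exact this)
      have hm1 : ((m₀ : ℚ) + 1) ≠ 0 := by positivity
      have hc0 : c = 0 := (mul_eq_zero.mp hcz).resolve_left hm1
      rw [← hc, hc0]
      simp
    · -- j > 2n : killed by hlow
      exact hlow (2 * n) hgt ⟨x, hxE⟩ hx
  -- every element of the monoid closure is homogeneous and killed by D
  have hclos : ∀ x ∈ Submonoid.closure s,
      ∃ p : ℕ, x ∈ 𝒜 p ∧ ∀ hxE : x ∈ E, D ⟨x, hxE⟩ = 0 := by
    intro x hx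
    induction hx using Submonoid.closure_induction with
    | mem z hz =>
      exact ⟨2 * n, hz, fun hzE => hgen z hz hzE⟩
    | one =>
      refine ⟨0, SetLike.one_mem_graded 𝒜, fun h1E => ?_⟩
      have : (⟨(1 : A), h1E⟩ : E) = 1 := rfl
      rw [this]
      exact hlow 0 hj 1 (SetLike.one_mem_graded 𝒜)
    | mul a b ha hb iha ihb =>
      obtain ⟨p, hap, haD⟩ := iha
      obtain ⟨q, hbq, hbD⟩ := ihb
      have haE : a ∈ E := by
        rw [hE, ← Subalgebra.mem_toSubmodule, Algebra.adjoin_eq_span]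
        exact Submodule.subset_span ha
      have hbE : b ∈ E := by
        rw [hE, ← Subalgebra.mem_toSubmodule, Algebra.adjoin_eq_span]
        exact Submodule.subset_span hb
      refine ⟨p + q, SetLike.mul_mem_graded hap hbq, fun habE => ?_⟩
      have hprod : (⟨a * b, habE⟩ : E) = (⟨a, haE⟩ : E) * ⟨b, hbE⟩ := rfl
      rw [hprod, hleib p ⟨a, haE⟩ ⟨b, hbE⟩ hap, haD haE, hbD hbE]
      simp
  -- conclude by linearity
  have hconv : ∀ z : A, z ∈ Submodule.span ℚ (Submonoid.closure s : Set A) → z ∈ E := by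
    intro z hz
    rw [hE, ← Subalgebra.mem_toSubmodule, Algebra.adjoin_eq_span]
    exact hz
  ext ⟨a, haE⟩
  have ha' : a ∈ Submodule.span ℚ (Submonoid.closure s : Set A) := by
    rw [← Algebra.adjoin_eq_span, Subalgebra.mem_toSubmodule, ← hE]
    exact haE
  show D ⟨a, haE⟩ = 0
  revert haE
  induction ha' using Submodule.span_induction with
  | mem z hz =>
    intro haE
    obtain ⟨p, _, hzD⟩ := hclos z hz
    exact hzD haE
  | zero =>
    intro h
    have : (⟨(0 : A), h⟩ : E) = 0 := rfl
    rw [this, map_zero]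
  | add u v hu hv ihu ihv =>
    intro h
    have huE := hconv u hu
    have hvE := hconv v hv
    have : (⟨u + v, h⟩ : E) = ⟨u, huE⟩ + ⟨v, hvE⟩ := rfl
    rw [this, map_add, ihu huE, ihv hvE, add_zero]
  | smul c u hu ihu =>
    intro h
    have huE := hconv u hu
    have : (⟨c • u, h⟩ : E) = c • ⟨u, huE⟩ := rfl
    rw [this, map_smul, ihu huE, smul_zero]
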